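/- Let W be a nonempty finite type and b : Set W → ℝ a belief function on W (b(∅) = 0, b(Set.univ) = 1, b(X) ≥ 0 for all X, and b(A ∪ B) ≥ b(A) + b(B) whenever A ∩ B = ∅) which is moreover 2-monotone: b(A ∪ B) + b(A ∩ B) ≥ b(A) + b(B) for all A, B ⊆ W. Then the neighbourhood N_1 := {X ⊆ W | b(X) = 1} contains its core: b(⋂₀ {X ⊆ W | b(X) = 1}) = 1. In particular N_1 is augmented (upward closed and containing its core). -/

import Mathlib

theorem N_one_contains_core_and_augmented (W : Type*) [Fintype W] [Nonempty W]
    (b : Set W → ℝ)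
    (hempty : b ∅ = 0) (huniv : b Set.univ = 1) (hnonneg : ∀ X : Set W, 0 ≤ b X)
    (hsuper : ∀ A B : Set W, A ∩ B = ∅ → b A + b B ≤ b (A ∪ B))
    (h2mono : ∀ A B : Set W, b A + b B ≤ b (A ∪ B) + b (A ∩ B)) :
    b (⋂₀ {X : Set W | b X = 1}) = 1 ∧
    (∀ X Y : Set W, X ∈ {Z : Set W | b Z = 1} → X ⊆ Y → Y ∈ {Z : Set W | b Z = 1}) ∧
    ⋂₀ {X : Set W | b X = 1} ∈ {X : Set W | b X = 1} := by
  have hle1 : ∀ X : Set W, b X ≤ 1 := by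
    intro X
    have h := hsuper X Xᶜ (Set.inter_compl_self X)
    rw [Set.union_compl_self, huniv] at h
    linarith [hnonneg Xᶜ]
  have hmono : ∀ X Y : Set W, X ⊆ Y → b X ≤ b Y := by
    intro X Y hXY
    have hd : X ∩ (Y \ X) = ∅ := by
      ext x; simp
    have h := hsuper X (Y \ X) hd
    rw [Set.union_diff_cancel hXY] at h
    linarith [hnonneg (Y \ X)]
  have hinter : ∀ A B : Set W, b A = 1 → b B = 1 → b (A ∩ B) = 1 := by
    intro A B hA hB
    have h := h2mono A B
    have := hle1 (A ∪ B)
    have := hle1 (A ∩ B)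
    linarith
  -- finite intersection
  have key : ∀ S : Set (Set W), S ⊆ {X : Set W | b X = 1} → b (⋂₀ S) = 1 := by
    intro S
    have hfin : S.Finite := Set.toFinite S
    refine Set.Finite.induction_on (motive := fun T _ => T ⊆ {X : Set W | b X = 1} → b (⋂₀ T) = 1)
      S hfin (fun _ => by simpa using huniv) ?_
    intro A S' _ _ ih hsub
    rw [Set.sInter_insert]
    exact hinter A (⋂₀ S') (hsub (Set.mem_insert A S'))
      (ih fun X hX => hsub (Set.mem_insert_of_mem A hX))
  have hcore : b (⋂₀ {X : Set W | b X = 1}) = 1 := key _ (fun _ h => h)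
  refine ⟨hcore, ?_, hcore⟩
  intro X Y hX hXY
  have := hmono X Y hXY
  have := hle1 Y
  simp only [Set.mem_setOf_eq] at hX ⊢
  linarith
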